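/- Let C be a linear subspace of 𝔽₂ⁿ with dual code C⊥ = {w ∈ 𝔽₂ⁿ : w·c = 0 for all c ∈ C}. For i ≥ 1, define the i-th generalized Hamming weight d_i of C⊥ as the minimum, over all i-dimensional subspaces D ⊆ C⊥, of the size of the support of D (the union of the supports of its elements). Then for every subset S ⊆ {1,…,n} with |S| < d_i, the subspace {w ∈ C⊥ : supp(w) ⊆ S} has dimension at most i − 1, and consequently the image of the restriction map C → 𝔽₂^S, x ↦ (x_i)_{i∈S}, has codimension at most i − 1 in 𝔽₂^S. (An eavesdropper observing fewer than d_i positions of a coset-coded codeword learns at most i − 1 bits of information about the message.) -/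

import Mathlib

open Finset in
/-- The dual code of `C ⊆ 𝔽₂ⁿ` w.r.t. the standard bilinear form
`w · c = ∑ i, w i * c i`. -/
def dualCode {n : ℕ} (C : Submodule (ZMod 2) (Fin n → ZMod 2)) :
    Submodule (ZMod 2) (Fin n → ZMod 2) where
  carrier := {w | ∀ c ∈ C, ∑ i, w i * c i = 0}
  zero_mem' := by intro c _; simp
  add_mem' := by
    intro a b ha hb c hc
    simpa [add_mul, Finset.sum_add_distrib] using by rw [ha c hc, hb c hc, add_zero]
  smul_mem' := by
    intro t a ha c hc
    simp only [Pi.smul_apply, smul_eq_mul, mul_assoc, ← Finset.mul_sum, ha c hc, mul_zero]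

/-- The subspace of vectors of `𝔽₂ⁿ` whose support is contained in `S`. -/
def supportedIn {n : ℕ} (S : Finset (Fin n)) :
    Submodule (ZMod 2) (Fin n → ZMod 2) where
  carrier := {w | ∀ j ∉ S, w j = 0}
  zero_mem' := by intro j _; rfl
  add_mem' := by intro a b ha hb j hj; simp [ha j hj, hb j hj]
  smul_mem' := by intro t a ha j hj; simp [ha j hj]

/-- Any finite-dimensional space has a submodule of any dimension up to its own. -/
lemma exists_submodule_finrank_eq' {K V : Type*} [Field K] [AddCommGroup V] [Module K V]
    [FiniteDimensional K V] {k : ℕ} (h : k ≤ Module.finrank K V) :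
    ∃ D : Submodule K V, Module.finrank K ↥D = k := by
  classical
  let b := Module.finBasis K V
  refine ⟨Submodule.span K (Set.range (⇑b ∘ Fin.castLE h)), ?_⟩
  rw [finrank_span_eq_card (b.linearIndependent.comp _ (Fin.castLE_injective h))]
  simp

lemma pi_toDual_apply {ι : Type*} [Fintype ι] [DecidableEq ι] (w v : ι → ZMod 2) :
    (Pi.basisFun (ZMod 2) ι).toDual w v = ∑ j, w j * v j := by
  have hv : v = ∑ j, v j • (Pi.basisFun (ZMod 2) ι) j := by
    ext j; simp [Pi.basisFun_apply, Pi.single_apply]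
  conv_lhs => rw [hv]
  simp only [map_sum, map_smul, smul_eq_mul, Module.Basis.toDual_apply_left]
  simp [mul_comm]

/-- Extension by zero from coordinates in `S` to all of `𝔽₂ⁿ`. -/
def extendZero {n : ℕ} (S : Finset (Fin n)) :
    ({j : Fin n // j ∈ S} → ZMod 2) →ₗ[ZMod 2] (Fin n → ZMod 2) where
  toFun w := fun j => if h : j ∈ S then w ⟨j, h⟩ else 0
  map_add' := by intro a b; ext j; by_cases h : j ∈ S <;> simp [h]
  map_smul' := by intro t a; ext j; by_cases h : j ∈ S <;> simp [h]

theorem generalized_wiretap_secrecy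
    {n : ℕ} (C : Submodule (ZMod 2) (Fin n → ZMod 2))
    (i : ℕ) (hi : 1 ≤ i) (di : ℕ)
    (hdi : ∀ D : Submodule (ZMod 2) (Fin n → ZMod 2),
      D ≤ dualCode C → Module.finrank (ZMod 2) D = i →
        di ≤ Set.ncard {j : Fin n | ∃ w ∈ D, w j ≠ 0})
    (S : Finset (Fin n)) (hS : S.card < di) :
    Module.finrank (ZMod 2) ↥(dualCode C ⊓ supportedIn S) ≤ i - 1 ∧
    S.card - Module.finrank (ZMod 2)
        ↥(C.map (LinearMap.funLeft (ZMod 2) (ZMod 2)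
            (fun j : {j : Fin n // j ∈ S} => (j : Fin n)))) ≤ i - 1 := by
  classical
  set W := dualCode C ⊓ supportedIn S with hW
  -- Part 1
  have part1 : Module.finrank (ZMod 2) ↥W ≤ i - 1 := by
    by_contra hcon
    push_neg at hcon
    have hik : i ≤ Module.finrank (ZMod 2) ↥W := by omega
    obtain ⟨D₀, hD₀⟩ := exists_submodule_finrank_eq' hik
    set D := D₀.map W.subtype with hD
    have hDrank : Module.finrank (ZMod 2) ↥D = i := by
      rw [← hD₀]
      exact (Submodule.equivMapOfInjective W.subtype W.injective_subtype D₀).symm.finrank_eq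
    have hDle : D ≤ dualCode C := by
      intro x hx
      obtain ⟨y, _, rfl⟩ := hx
      exact y.2.1
    have hsupp : {j : Fin n | ∃ w ∈ D, w j ≠ 0} ⊆ (↑S : Set (Fin n)) := by
      intro j hj
      obtain ⟨w, hwD, hwj⟩ := hj
      obtain ⟨y, _, rfl⟩ := hwD
      by_contra hjS
      exact hwj (y.2.2 j hjS)
    have hcard : Set.ncard {j : Fin n | ∃ w ∈ D, w j ≠ 0} ≤ S.card := by
      have := Set.ncard_le_ncard hsupp S.finite_toSet
      simpa [Set.ncard_coe_finset] using this
    exact absurd hS (not_lt.mpr (le_trans (hdi D hDle hDrank) hcard))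
  refine ⟨part1, ?_⟩
  -- Part 2
  set r := LinearMap.funLeft (ZMod 2) (ZMod 2)
      (fun j : {j : Fin n // j ∈ S} => (j : Fin n)) with hr
  set V := C.map r with hV
  set ε := (Pi.basisFun (ZMod 2) {j : Fin n // j ∈ S}).toDualEquiv with hε
  set A := Submodule.comap ε.toLinearMap V.dualAnnihilator with hA
  -- finrank A = S.card - finrank V
  have hrankA : Module.finrank (ZMod 2) ↥V + Module.finrank (ZMod 2) ↥A = S.card := by
    have h1 : Module.finrank (ZMod 2) ↥A
        = Module.finrank (ZMod 2) ↥V.dualAnnihilator := by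
      rw [hA, Submodule.comap_equiv_eq_map_symm]
      exact (LinearEquiv.finrank_map_eq _ _)
    have h2 := LinearEquiv.finrank_eq (R := ZMod 2)
        (M := (({j : Fin n // j ∈ S} → ZMod 2) ⧸ V)) (N := ↥V.dualAnnihilator)
        (Subspace.quotEquivAnnihilator V)
    have h3 := Submodule.finrank_quotient_add_finrank V
    have h4 : Module.finrank (ZMod 2) ({j : Fin n // j ∈ S} → ZMod 2) = S.card := by
      simp [Module.finrank_fintype_fun_eq_card]
    omega
  -- injective map A →ₗ W
  have hmem : ∀ x ∈ A, extendZero S x ∈ W := by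
    intro x hx
    have hann : ∀ v ∈ V, ε x v = 0 := by
      rw [hA, Submodule.mem_comap] at hx
      simpa [Submodule.mem_dualAnnihilator] using hx
    constructor
    · intro c hc
      have hv : r c ∈ V := Submodule.mem_map_of_mem hc
      have h0 := hann (r c) hv
      rw [show ε x (r c) = ∑ j : {j : Fin n // j ∈ S}, x j * c ↑j by
        rw [hε]
        rw [Module.Basis.toDualEquiv_apply, pi_toDual_apply]
        rfl] at h0
      calc ∑ j : Fin n, extendZero S x j * c j
          = ∑ j ∈ S, extendZero S x j * c j := by
            refine (Finset.sum_subset (Finset.subset_univ S) ?_).symm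
            intro j _ hj
            simp [extendZero, hj]
        _ = ∑ j ∈ S.attach, x j * c ↑j := by
            rw [← Finset.sum_attach S (fun j => extendZero S x j * c j)]
            refine Finset.sum_congr rfl fun j _ => ?_
            simp [extendZero, j.2]
        _ = 0 := by rw [← h0]; rw [show (Finset.univ : Finset {j : Fin n // j ∈ S}) = S.attach from rfl]
    · intro j hj
      simp [extendZero, hj]
  have hinj : Function.Injective ((extendZero S).restrict hmem) := by
    intro x y hxy
    ext j
    have := congrFun (congrArg Subtype.val hxy) j
    simpa [LinearMap.restrict_apply, extendZero, j.2] using this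
  have hle : Module.finrank (ZMod 2) ↥A ≤ Module.finrank (ZMod 2) ↥W :=
    LinearMap.finrank_le_finrank_of_injective hinj
  omega
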